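/- Combining the two local estimates: for every entire f with finite Fock ∞-norm, every n ∈ ℕ and every z ∈ ℂ, |f^(n)(z)| ≤ n! · e^{3/2} · (1 + |z|)^n · e^{|z|²/2} · sup_{w} |f(w)| e^{-|w|²/2}. -/

import Mathlib

open Complex Real

/-- Global pointwise derivative estimate for entire functions with finite Fock growth norm. -/
theorem stmt_2 (f : ℂ → ℂ) (hf : Differentiable ℂ f)
    (hbdd : BddAbove (Set.range fun w : ℂ =>
      ‖f w‖ * Real.exp (-(‖w‖) ^ 2 / 2)))
    (n : ℕ) (z : ℂ) :
    ‖iteratedDeriv n f z‖ ≤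
      (n.factorial : ℝ) * Real.exp (3 / 2) * (1 + ‖z‖) ^ n *
        Real.exp ((‖z‖) ^ 2 / 2) *
        ⨆ w : ℂ, ‖f w‖ * Real.exp (-(‖w‖) ^ 2 / 2) := by
  set M : ℝ := ⨆ w : ℂ, ‖f w‖ * Real.exp (-(‖w‖) ^ 2 / 2) with hM
  have hMle : ∀ w : ℂ, ‖f w‖ * Real.exp (-(‖w‖) ^ 2 / 2) ≤ M :=
    fun w => le_ciSup hbdd w
  have hM0 : 0 ≤ M :=
    le_trans (by positivity) (hMle 0)
  have hfw : ∀ w : ℂ, ‖f w‖ ≤ M * Real.exp ((‖w‖) ^ 2 / 2) := by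
    intro w
    have h1 := hMle w
    have h2 : (0:ℝ) < Real.exp ((‖w‖) ^ 2 / 2) := Real.exp_pos _
    have := mul_le_mul_of_nonneg_right h1 h2.le
    rw [mul_assoc, ← Real.exp_add] at this
    have h3 : -(‖w‖) ^ 2 / 2 + (‖w‖) ^ 2 / 2 = 0 := by ring
    rw [h3, Real.exp_zero, mul_one] at this
    simpa using this
  set a : ℝ := ‖z‖ with ha
  have ha0 : (0:ℝ) ≤ a := norm_nonneg z
  have h1a : (0:ℝ) < 1 + a := by linarith
  set R : ℝ := (1 + a)⁻¹ with hR
  have hR0 : 0 < R := inv_pos.mpr h1a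
  have hR1 : R ≤ 1 := by
    rw [hR]
    rw [inv_le_one_iff₀]; right; linarith
  have hRa : R * (1 + a) = 1 := inv_mul_cancel₀ h1a.ne'
  -- power series
  set Rnn : NNReal := ⟨R, hR0.le⟩ with hRnn
  have hcoe : ((Rnn : ℝ)) = R := rfl
  have hps : HasFPowerSeriesOnBall f (cauchyPowerSeries f z Rnn) z ⊤ :=
    hf.hasFPowerSeriesOnBall z (by exact_mod_cast hR0)
  set p := cauchyPowerSeries f z Rnn with hp
  -- step A : ‖iteratedDeriv n f z‖ ≤ n! * ‖p n‖
  have hfac := hps.factorial_smul (1:ℂ) n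
  have hiter : ‖iteratedDeriv n f z‖ ≤ (n.factorial : ℝ) * ‖p n‖ := by
    have : iteratedDeriv n f z = iteratedFDeriv ℂ n f z (fun _ => 1) :=
      iteratedDeriv_eq_iteratedFDeriv
    rw [this, ← hfac, ← Nat.cast_smul_eq_nsmul ℝ, norm_smul]
    have hle : ‖p n (fun _ : Fin n => (1:ℂ))‖ ≤ ‖p n‖ := by
      have := (p n).le_opNorm (fun _ : Fin n => (1:ℂ))
      simpa using this
    simp only [Real.norm_natCast]
    exact mul_le_mul_of_nonneg_left hle (by positivity)
  -- step B : bound ‖p n‖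
  set C : ℝ := M * Real.exp ((a + R) ^ 2 / 2) with hC
  have hC0 : 0 ≤ C := by positivity
  have hint : (∫ θ : ℝ in (0:ℝ)..2 * π, ‖f (circleMap z Rnn θ)‖) ≤ 2 * π * C := by
    have hbound : ∀ θ ∈ Set.Icc (0:ℝ) (2 * π), ‖f (circleMap z Rnn θ)‖ ≤ C := by
      intro θ _
      have habs : ‖circleMap z Rnn θ‖ ≤ a + R := by
        have hd : dist (circleMap z (Rnn : ℝ) θ) z = R := by
          have := circleMap_mem_sphere z hR0.le θ
          rw [Metric.mem_sphere] at this
          exact this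
        have h5 : circleMap z (Rnn : ℝ) θ = z + (circleMap z (Rnn : ℝ) θ - z) := by ring
        have h4 := norm_add_le z (circleMap z (Rnn : ℝ) θ - z)
        rw [← h5, ← Complex.dist_eq, hd] at h4
        exact h4
      refine (hfw _).trans ?_
      rw [hC]
      refine mul_le_mul_of_nonneg_left ?_ hM0
      apply Real.exp_le_exp.mpr
      have h2 : (‖circleMap z Rnn θ‖) ^ 2 ≤ (a + R) ^ 2 := by
        apply pow_le_pow_left₀ (norm_nonneg _) habs
      linarith
    calc (∫ θ : ℝ in (0:ℝ)..2 * π, ‖f (circleMap z Rnn θ)‖)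
        ≤ ∫ _ : ℝ in (0:ℝ)..2 * π, C := by
          apply intervalIntegral.integral_mono_on Real.two_pi_pos.le
          · exact ((hf.continuous.comp (continuous_circleMap _ _)).norm).intervalIntegrable _ _
          · exact intervalIntegrable_const
          · exact hbound
      _ = 2 * π * C := by
          rw [intervalIntegral.integral_const, smul_eq_mul]; ring
  have hpn : ‖p n‖ ≤ C * R⁻¹ ^ n := by
    refine (norm_cauchyPowerSeries_le f z Rnn n).trans ?_
    have h1 : |(Rnn : ℝ)| = R := by rw [hcoe]; exact _root_.abs_of_nonneg hR0.le
    rw [h1]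
    refine mul_le_mul_of_nonneg_right ?_ (by positivity)
    calc (2 * π)⁻¹ * ∫ θ : ℝ in (0:ℝ)..2 * π, ‖f (circleMap z Rnn θ)‖
        ≤ (2 * π)⁻¹ * (2 * π * C) := by
          exact mul_le_mul_of_nonneg_left hint (by positivity)
      _ = C := by
          field_simp
  -- put together
  have hRinv : R⁻¹ = 1 + a := by rw [hR, inv_inv]
  have hexp : Real.exp ((a + R) ^ 2 / 2) ≤ Real.exp (3 / 2) * Real.exp (a ^ 2 / 2) := by
    rw [← Real.exp_add]
    apply Real.exp_le_exp.mpr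
    nlinarith [hR0.le, hR1, ha0, hRa]
  calc ‖iteratedDeriv n f z‖
      = ‖iteratedDeriv n f z‖ := rfl
    _ ≤ (n.factorial : ℝ) * ‖p n‖ := hiter
    _ ≤ (n.factorial : ℝ) * (C * R⁻¹ ^ n) :=
        mul_le_mul_of_nonneg_left hpn (by positivity)
    _ = (n.factorial : ℝ) * (1 + a) ^ n * (M * Real.exp ((a + R) ^ 2 / 2)) := by
        rw [hRinv, hC]; ring
    _ ≤ (n.factorial : ℝ) * (1 + a) ^ n *
        (M * (Real.exp (3 / 2) * Real.exp (a ^ 2 / 2))) := by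
        refine mul_le_mul_of_nonneg_left ?_ (by positivity)
        exact mul_le_mul_of_nonneg_left hexp hM0
    _ = (n.factorial : ℝ) * Real.exp (3 / 2) * (1 + a) ^ n * Real.exp (a ^ 2 / 2) * M := by
        ring
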